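/- Let Γ be the circle of circumference π, λ ∈ (0,1), α ∈ ℂ with Re α < 1, and let ℓ(r) denote arc length from a fixed point γ to r along Γ (counterclockwise). If f(r) = ℓ(r)^{-α} + (π − ℓ(r))^{-α} and K is the operator Kρ(r) = 2λ ∫_Γ (∂G/∂ν)(r,r') ρ(r') dℓ' with G(r,r') = −(1/2π) log|r−r'|, then ρ(r) = f(r) + 2λ π^{-α} / ((1−α)(1−λ)) solves (I+K)ρ = f on Γ. -/

import Mathlib

open MeasureTheory Set

/-- The transmission-problem integral equation on the circle of circumference `π`,
parameterized by arc length `s ∈ (0, π)`, with `Kρ(s) = -(λ/π) ∫_0^π ρ(t) dt`.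
The explicit `ρ` solves `(I+K)ρ = f`. -/
theorem stmt_7 (lam : ℝ) (hlam : lam ∈ Set.Ioo (0 : ℝ) 1) (α : ℂ) (hα : α.re < 1)
    (f ρ : ℝ → ℂ)
    (hf : ∀ s, f s = (s : ℂ) ^ (-α) + ((π : ℝ) - s : ℂ) ^ (-α))
    (hρ : ∀ s, ρ s = f s + 2 * lam * (π : ℂ) ^ (-α) / ((1 - α) * (1 - lam))) :
    ∀ s ∈ Set.Ioo (0 : ℝ) π,
      ρ s - ((lam : ℂ) / π) * ∫ t in (0 : ℝ)..π, ρ t = f s := by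
  intro s hs
  have hπ : (0:ℝ) < π := lt_trans hs.1 hs.2
  have h1α : (1:ℂ) - α ≠ 0 := by
    intro h
    have : ((1:ℂ) - α).re = 0 := by rw [h]; simp
    simp [Complex.sub_re] at this
    linarith
  have hre : -1 < (-α).re := by
    simp [Complex.neg_re]; linarith
  have hc : (-α) + 1 ≠ 0 := by
    intro h; exact h1α (by linear_combination h)
  set c : ℂ := 2 * lam * (π : ℂ) ^ (-α) / ((1 - α) * (1 - lam)) with hcdef
  have hI1 : (∫ t in (0:ℝ)..π, (t : ℂ) ^ (-α)) = (π:ℂ) ^ (1 - α) / (1 - α) := by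
    rw [integral_cpow (Or.inl hre), show (-α) + 1 = 1 - α from by ring]
    norm_num
    rw [Complex.zero_cpow h1α]
    ring
  have hI2 : (∫ t in (0:ℝ)..π, ((π : ℝ) - t : ℂ) ^ (-α)) = (π:ℂ) ^ (1 - α) / (1 - α) := by
    have h := intervalIntegral.integral_comp_sub_left (a := (0:ℝ)) (b := π)
      (fun t : ℝ => (t : ℂ) ^ (-α)) π
    simp only [sub_zero, sub_self] at h
    calc (∫ t in (0:ℝ)..π, ((π : ℝ) - t : ℂ) ^ (-α))
        = ∫ t in (0:ℝ)..π, (((π - t : ℝ)) : ℂ) ^ (-α) := by push_cast; rfl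
      _ = (π:ℂ) ^ (1 - α) / (1 - α) := by rw [h, hI1]
  have h1 : IntervalIntegrable (fun t : ℝ => (t : ℂ) ^ (-α)) volume 0 π :=
    intervalIntegral.intervalIntegrable_cpow' hre
  have h2 : IntervalIntegrable (fun t : ℝ => ((π : ℝ) - t : ℂ) ^ (-α)) volume 0 π := by
    have := (intervalIntegral.intervalIntegrable_cpow' (r := -α) (a := (0:ℝ)) (b := π) hre).comp_sub_left π
    simp only [sub_zero, sub_self] at this
    have h' := this.symm
    refine h'.congr ?_
    intro t _
    push_cast
    rfl
  have h3 : IntervalIntegrable (fun _ : ℝ => c) volume 0 π := intervalIntegrable_const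
  have hint : (∫ t in (0:ℝ)..π, ρ t) = 2 * (π:ℂ) ^ (1 - α) / (1 - α) + π * c := by
    have heq : (∫ t in (0:ℝ)..π, ρ t) =
        ∫ t in (0:ℝ)..π, ((t : ℂ) ^ (-α) + (((π : ℝ) - t : ℂ) ^ (-α) + c)) := by
      refine intervalIntegral.integral_congr fun t _ => ?_
      rw [hρ t, hf t]; ring
    rw [heq, intervalIntegral.integral_add h1 (h2.add h3),
      intervalIntegral.integral_add h2 h3, hI1, hI2, intervalIntegral.integral_const,
      sub_zero, Complex.real_smul]
    ring
  rw [hρ s, hint]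
  have hlam1 : (1:ℂ) - lam ≠ 0 := by
    intro h
    have : ((1:ℂ) - (lam:ℂ)).re = 0 := by rw [h]; simp
    simp at this
    have := hlam.2
    linarith
  have hπC : (π:ℂ) ≠ 0 := by exact_mod_cast hπ.ne'
  have hcpow : (π:ℂ) ^ (1 - α) = π * (π:ℂ) ^ (-α) := by
    rw [show (1:ℂ) - α = 1 + (-α) from by ring, Complex.cpow_add _ _ hπC, Complex.cpow_one]
  have key : ((lam : ℂ)/π) * (2 * (π:ℂ) ^ (1 - α) / (1 - α) + π * c) = c := by
    rw [hcpow, hcdef]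
    field_simp
    ring
  rw [key]
  ring
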